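/- Let L : 𝕊ⁿ → 𝕊ⁿ, L(Z) = ZÂ + ÂᵀZ + Σ_{l=1}^r Ĉ_lᵀZĈ_l. Suppose there exist matrices E_l ∈ ℝ^{q×n} (0 ≤ l ≤ r) and Θ ∈ ℝ^{n×q} such that the system (Â + ΘE₀, Ĉ₁ + ΘE₁, …, Ĉ_r + ΘE_r) is mean-square stable, and suppose Z ∈ 𝕊ⁿ, Z ⪰ 0 satisfies L(Z) + Σ_{l=0}^r E_lᵀE_l = 0. Then the system (Â, Ĉ₁, …, Ĉ_r) is mean-square stable. -/

import Mathlib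

open Matrix

lemma dot_self_nonneg' {m : ℕ} (v : Fin m → ℝ) : 0 ≤ v ⬝ᵥ v :=
  Finset.sum_nonneg fun i _ => mul_self_nonneg _

lemma quad_continuous {n : ℕ} (S : Matrix (Fin n) (Fin n) ℝ) :
    Continuous fun x : Fin n → ℝ => x ⬝ᵥ (S *ᵥ x) := by
  simp only [dotProduct, mulVec]
  exact continuous_finset_sum _ fun i _ =>
    (continuous_apply i).mul (continuous_finset_sum _ fun j _ =>
      (continuous_const.mul (continuous_apply j)))

lemma exists_eps {n : ℕ} (S N : Matrix (Fin n) (Fin n) ℝ)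
    (hS : ∀ x : Fin n → ℝ, x ≠ 0 → 0 < x ⬝ᵥ (S *ᵥ x))
    (hN : ∀ x : Fin n → ℝ, 0 ≤ x ⬝ᵥ (N *ᵥ x)) :
    ∃ ε : ℝ, 0 < ε ∧ ∀ x : Fin n → ℝ, x ≠ 0 → ε * (x ⬝ᵥ (N *ᵥ x)) < x ⬝ᵥ (S *ᵥ x) := by
  set K := Metric.sphere (0 : Fin n → ℝ) 1 with hK
  have scale : ∀ (c : ℝ) (u : Fin n → ℝ) (M : Matrix (Fin n) (Fin n) ℝ),
      (c • u) ⬝ᵥ (M *ᵥ (c • u)) = c^2 * (u ⬝ᵥ (M *ᵥ u)) := by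
    intro c u M
    rw [mulVec_smul, smul_dotProduct, dotProduct_smul, smul_eq_mul, smul_eq_mul]
    ring
  rcases K.eq_empty_or_nonempty with hKe | hKne
  · refine ⟨1, one_pos, fun x hx => ?_⟩
    exfalso
    have hxn : ‖x‖ ≠ 0 := norm_ne_zero_iff.mpr hx
    have : (‖x‖⁻¹ • x) ∈ K := by
      simp [hK, norm_smul, abs_of_nonneg (inv_nonneg.mpr (norm_nonneg x)),
        inv_mul_cancel₀ hxn]
    simp [hKe] at this
  · have hcomp : IsCompact K := isCompact_sphere 0 1
    obtain ⟨x₀, hx₀K, hmin'⟩ := hcomp.exists_isMinOn hKne (quad_continuous S).continuousOn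
    have hmin := isMinOn_iff.mp hmin'
    obtain ⟨y₀, hy₀K, hmax'⟩ := hcomp.exists_isMaxOn hKne (quad_continuous N).continuousOn
    have hmax := isMaxOn_iff.mp hmax'
    have hx₀ne : x₀ ≠ 0 := by
      intro h
      rw [hK] at hx₀K
      simp [h] at hx₀K
    set m := x₀ ⬝ᵥ (S *ᵥ x₀) with hm
    set Mx := y₀ ⬝ᵥ (N *ᵥ y₀) with hMx
    have hmpos : 0 < m := hS x₀ hx₀ne
    have hMnn : 0 ≤ Mx := hN y₀
    refine ⟨m / (Mx + 1), div_pos hmpos (by linarith), fun x hx => ?_⟩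
    have hxn : ‖x‖ ≠ 0 := norm_ne_zero_iff.mpr hx
    set u := ‖x‖⁻¹ • x with hu
    have huK : u ∈ K := by
      simp [hu, hK, norm_smul, abs_of_nonneg (inv_nonneg.mpr (norm_nonneg x)),
        inv_mul_cancel₀ hxn]
    have hxu : x = ‖x‖ • u := by
      rw [hu, smul_smul, mul_inv_cancel₀ hxn, one_smul]
    have hSx : x ⬝ᵥ (S *ᵥ x) = ‖x‖^2 * (u ⬝ᵥ (S *ᵥ u)) := by rw [hxu, scale]; rw [← hxu]
    have hNx : x ⬝ᵥ (N *ᵥ x) = ‖x‖^2 * (u ⬝ᵥ (N *ᵥ u)) := by rw [hxu, scale]; rw [← hxu]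
    have h1 : m ≤ u ⬝ᵥ (S *ᵥ u) := hmin u huK
    have h2 : u ⬝ᵥ (N *ᵥ u) ≤ Mx := hmax u huK
    have h3 : 0 < ‖x‖^2 := by positivity
    rw [hSx, hNx]
    have key : m / (Mx + 1) * (u ⬝ᵥ (N *ᵥ u)) < u ⬝ᵥ (S *ᵥ u) := by
      have hNu : 0 ≤ u ⬝ᵥ (N *ᵥ u) := hN u
      have hle : m / (Mx + 1) * (u ⬝ᵥ (N *ᵥ u)) ≤ m / (Mx + 1) * Mx :=
        mul_le_mul_of_nonneg_left h2 (le_of_lt (div_pos hmpos (by linarith)))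
      have h4 : m / (Mx + 1) * Mx < m := by
        rw [div_mul_eq_mul_div, div_lt_iff₀ (by linarith)]
        nlinarith
      linarith
    calc m / (Mx + 1) * (‖x‖^2 * (u ⬝ᵥ (N *ᵥ u)))
        = ‖x‖^2 * (m / (Mx + 1) * (u ⬝ᵥ (N *ᵥ u))) := by ring
      _ < ‖x‖^2 * (u ⬝ᵥ (S *ᵥ u)) := (mul_lt_mul_iff_right₀ h3).mpr key

/-- `x ⬝ᵥ ((Aᵀ * B) *ᵥ x) = (A *ᵥ x) ⬝ᵥ (B *ᵥ x)`. -/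
lemma dot_tmul {m k p : ℕ} (A : Matrix (Fin m) (Fin k) ℝ) (B : Matrix (Fin m) (Fin p) ℝ)
    (x : Fin k → ℝ) (y : Fin p → ℝ) :
    x ⬝ᵥ ((Aᵀ * B) *ᵥ y) = (A *ᵥ x) ⬝ᵥ (B *ᵥ y) := by
  rw [← mulVec_mulVec, dotProduct_mulVec, vecMul_transpose]

lemma sum_mulVec' {k m r : ℕ} (M : Fin r → Matrix (Fin k) (Fin m) ℝ) (x : Fin m → ℝ) :
    (∑ l, M l) *ᵥ x = ∑ l, M l *ᵥ x := by
  ext i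
  simp only [mulVec, dotProduct, Finset.sum_apply, Matrix.sum_apply, Finset.sum_mul]
  rw [Finset.sum_comm]

lemma dotProduct_sum' {m r : ℕ} (x : Fin m → ℝ) (v : Fin r → Fin m → ℝ) :
    x ⬝ᵥ (∑ l, v l) = ∑ l, x ⬝ᵥ v l := by
  simp only [dotProduct, Finset.sum_apply, Finset.mul_sum]
  rw [Finset.sum_comm]

lemma dot_shift {m k : ℕ} (A : Matrix (Fin m) (Fin k) ℝ) (v : Fin m → ℝ) (w : Fin k → ℝ) :
    v ⬝ᵥ (A *ᵥ w) = (Aᵀ *ᵥ v) ⬝ᵥ w := by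
  rw [dotProduct_mulVec, mulVec_transpose]

lemma sq_expand {m : ℕ} (a b : Fin m → ℝ) (ε : ℝ) :
    0 ≤ b ⬝ᵥ b + 2 * ε * (a ⬝ᵥ b) + ε^2 * (a ⬝ᵥ a) := by
  have h := dot_self_nonneg' (ε • a + b)
  simp only [add_dotProduct, dotProduct_add, smul_dotProduct, dotProduct_smul,
    smul_eq_mul, dotProduct_comm b a] at h
  nlinarith [h]

/-- Mean-square stability via the stochastic Lyapunov criterion (equivalent to
`E[X(t)ᵀX(t)] → 0` for the system `dX = AXdt + Σ_l C_lXdw_l`). -/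
def MeanSquareStable {n : ℕ} (r : ℕ) (A : Matrix (Fin n) (Fin n) ℝ)
    (C : Fin r → Matrix (Fin n) (Fin n) ℝ) : Prop :=
  ∃ Z : Matrix (Fin n) (Fin n) ℝ, Z.PosDef ∧
    (-(Z * A + Aᵀ * Z + ∑ l, (C l)ᵀ * Z * C l)).PosDef

/-- stochastic detectability implies stability.  If the
observation system `[E₀, …, E_r; Â, Ĉ₁, …, Ĉ_r]` is stochastically detectable
(there is `Θ` making `(Â + ΘE₀, Ĉ₁ + ΘE₁, …, Ĉ_r + ΘE_r)` mean-square stable)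
and some `Z ⪰ 0` solves `L(Z) + Σ_{l=0}^r E_lᵀE_l = 0` with
`L(Z) = ZÂ + ÂᵀZ + Σ_l Ĉ_lᵀZĈ_l`, then `(Â, Ĉ₁, …, Ĉ_r)` is mean-square
stable. -/
theorem detectability_implies_stability (n q r : ℕ)
    (Ahat : Matrix (Fin n) (Fin n) ℝ)
    (Chat : Fin r → Matrix (Fin n) (Fin n) ℝ)
    (E₀ : Matrix (Fin q) (Fin n) ℝ) (E : Fin r → Matrix (Fin q) (Fin n) ℝ)
    (Θ : Matrix (Fin n) (Fin q) ℝ)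
    (hdet : MeanSquareStable r (Ahat + Θ * E₀) (fun l => Chat l + Θ * E l))
    (Z : Matrix (Fin n) (Fin n) ℝ) (hZ : Z.PosSemidef)
    (hlyap : Z * Ahat + Ahatᵀ * Z + (∑ l, (Chat l)ᵀ * Z * Chat l)
        + (E₀ᵀ * E₀ + ∑ l, (E l)ᵀ * E l) = 0) :
    MeanSquareStable r Ahat Chat := by
  obtain ⟨P, hP, hSdef⟩ := hdet
  have hPt : Pᵀ = P := (conjTranspose_eq_transpose_of_trivial P) ▸ hP.1
  have hZt : Zᵀ = Z := (conjTranspose_eq_transpose_of_trivial Z) ▸ hZ.1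
  set S : Matrix (Fin n) (Fin n) ℝ :=
    -(P * (Ahat + Θ * E₀) + (Ahat + Θ * E₀)ᵀ * P
      + ∑ l, (Chat l + Θ * E l)ᵀ * P * (Chat l + Θ * E l)) with hSdef'
  have hS : S.PosDef := hSdef
  set N : Matrix (Fin n) (Fin n) ℝ :=
    (Θᵀ * P)ᵀ * (Θᵀ * P) + ∑ l, (Θᵀ * (P * Chat l))ᵀ * (Θᵀ * (P * Chat l)) with hNdef
  -- quadratic form of N
  have hNform : ∀ x : Fin n → ℝ, x ⬝ᵥ (N *ᵥ x)
      = ((Θᵀ * P) *ᵥ x) ⬝ᵥ ((Θᵀ * P) *ᵥ x)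
        + ∑ l, ((Θᵀ * (P * Chat l)) *ᵥ x) ⬝ᵥ ((Θᵀ * (P * Chat l)) *ᵥ x) := by
    intro x
    rw [hNdef, add_mulVec, dotProduct_add, dot_tmul]
    congr 1
    rw [sum_mulVec', dotProduct_sum']
    exact Finset.sum_congr rfl fun l _ => dot_tmul _ _ _ _
  have hNnn : ∀ x : Fin n → ℝ, 0 ≤ x ⬝ᵥ (N *ᵥ x) := fun x => by
    rw [hNform]
    exact add_nonneg (dot_self_nonneg' _)
      (Finset.sum_nonneg fun l _ => dot_self_nonneg' _)
  have hSpos : ∀ x : Fin n → ℝ, x ≠ 0 → 0 < x ⬝ᵥ (S *ᵥ x) := by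
    intro x hx
    have := hS.dotProduct_mulVec_pos hx
    simpa using this
  obtain ⟨ε, hε, hεN⟩ := exists_eps S N hSpos hNnn
  refine ⟨Z + ε • P, ?_, ?_⟩
  · -- Z + ε • P is positive definite
    have hεP : (ε • P).PosDef := by
      refine Matrix.PosDef.of_dotProduct_mulVec_pos ?_ ?_
      · have := hP.1
        simpa [Matrix.IsHermitian, conjTranspose_smul, this.eq] using congrArg (ε • ·) this
      · intro x hx
        have := hP.dotProduct_mulVec_pos hx
        rw [smul_mulVec, dotProduct_smul]
        exact smul_pos hε this
    exact Matrix.PosDef.posSemidef_add hZ hεP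
  · -- the Lyapunov matrix is positive definite
    set M : Matrix (Fin n) (Fin n) ℝ :=
      P * (Θ * E₀) + (P * (Θ * E₀))ᵀ
        + ∑ l, ((Chat l)ᵀ * (P * (Θ * E l)) + ((Chat l)ᵀ * (P * (Θ * E l)))ᵀ
          + (Θ * E l)ᵀ * (P * (Θ * E l))) with hMdef
    set Q : Matrix (Fin n) (Fin n) ℝ := E₀ᵀ * E₀ + ∑ l, (E l)ᵀ * E l with hQdef
    have key : -((Z + ε • P) * Ahat + Ahatᵀ * (Z + ε • P)
          + ∑ l, (Chat l)ᵀ * (Z + ε • P) * Chat l)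
        = Q + ε • S + ε • M := by
      rw [hQdef, hSdef', hMdef]
      have hZl : Z * Ahat + Ahatᵀ * Z + ∑ l, (Chat l)ᵀ * Z * Chat l
          = -(E₀ᵀ * E₀ + ∑ l, (E l)ᵀ * E l) := eq_neg_of_add_eq_zero_left hlyap
      simp only [Matrix.add_mul, Matrix.mul_add, Matrix.smul_mul, Matrix.mul_smul,
        transpose_add, transpose_mul, transpose_smul, transpose_transpose, hPt,
        Finset.sum_add_distrib, smul_add, smul_neg, Matrix.mul_assoc, neg_add,
        ← Finset.smul_sum]
      have h2 : ∑ l, (Chat l)ᵀ * (Z * Chat l) = ∑ l, (Chat l)ᵀ * Z * Chat l := by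
        simp [Matrix.mul_assoc]
      rw [h2]
      have h4 : ∑ l, (Chat l)ᵀ * Z * Chat l
          = -(E₀ᵀ * E₀ + ∑ l, (E l)ᵀ * E l) - Z * Ahat - Ahatᵀ * Z := by
        rw [← hZl]; abel
      rw [h4]
      abel
    refine Matrix.PosDef.of_dotProduct_mulVec_pos ?_ ?_
    · -- Hermitian
      have hsym : (-((Z + ε • P) * Ahat + Ahatᵀ * (Z + ε • P)
            + ∑ l, (Chat l)ᵀ * (Z + ε • P) * Chat l))ᵀ
          = -((Z + ε • P) * Ahat + Ahatᵀ * (Z + ε • P)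
            + ∑ l, (Chat l)ᵀ * (Z + ε • P) * Chat l) := by
        simp only [transpose_neg, transpose_add, transpose_mul, transpose_smul,
          transpose_transpose, hPt, hZt, transpose_sum]
        congr 1
        rw [add_comm ((Z + ε • P) * Ahat)]
        congr 1
        exact Finset.sum_congr rfl fun l _ => by
          rw [← Matrix.mul_assoc]
      rw [Matrix.IsHermitian, conjTranspose_eq_transpose_of_trivial, hsym]
    · -- positivity
      intro x hx
      have hstar : star x = x := by simp
      rw [hstar, key]
      -- introduce vectors
      set a0 : Fin q → ℝ := (Θᵀ * P) *ᵥ x with ha0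
      set b0 : Fin q → ℝ := E₀ *ᵥ x with hb0
      set a : Fin r → Fin q → ℝ := fun l => (Θᵀ * (P * Chat l)) *ᵥ x with ha
      set b : Fin r → Fin q → ℝ := fun l => E l *ᵥ x with hb
      set c : Fin r → ℝ := fun l => ((Θ * E l) *ᵥ x) ⬝ᵥ ((P * (Θ * E l)) *ᵥ x) with hc
      -- quadratic forms
      have hQx : x ⬝ᵥ (Q *ᵥ x) = b0 ⬝ᵥ b0 + ∑ l, (b l) ⬝ᵥ (b l) := by
        rw [hQdef, add_mulVec, dotProduct_add, dot_tmul, sum_mulVec', dotProduct_sum']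
        congr 1
        exact Finset.sum_congr rfl fun l _ => dot_tmul _ _ _ _
      have hcross0 : x ⬝ᵥ ((P * (Θ * E₀)) *ᵥ x) = a0 ⬝ᵥ b0 := by
        rw [show P * (Θ * E₀) = (Θᵀ * P)ᵀ * E₀ by
            rw [transpose_mul, transpose_transpose, hPt, Matrix.mul_assoc],
          dot_tmul]
      have hcrossl : ∀ l, x ⬝ᵥ (((Chat l)ᵀ * (P * (Θ * E l))) *ᵥ x) = (a l) ⬝ᵥ (b l) := by
        intro l
        rw [show (Chat l)ᵀ * (P * (Θ * E l)) = (Θᵀ * (P * Chat l))ᵀ * E l by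
            rw [transpose_mul, transpose_mul, transpose_transpose, hPt,
              Matrix.mul_assoc, Matrix.mul_assoc],
          dot_tmul]
      have htr : ∀ (Y : Matrix (Fin n) (Fin n) ℝ), x ⬝ᵥ (Yᵀ *ᵥ x) = x ⬝ᵥ (Y *ᵥ x) := by
        intro Y
        rw [dot_shift, transpose_transpose, dotProduct_comm]
      have hMx : x ⬝ᵥ (M *ᵥ x)
          = 2 * (a0 ⬝ᵥ b0) + ∑ l, (2 * ((a l) ⬝ᵥ (b l)) + c l) := by
        rw [hMdef, add_mulVec, add_mulVec, dotProduct_add, dotProduct_add, htr, hcross0,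
          sum_mulVec', dotProduct_sum']
        congr 1
        · ring
        refine Finset.sum_congr rfl fun l _ => ?_
        rw [add_mulVec, add_mulVec, dotProduct_add, dotProduct_add, htr, hcrossl l,
          show x ⬝ᵥ (((Θ * E l)ᵀ * (P * (Θ * E l))) *ᵥ x) = c l from dot_tmul _ _ _ _]
        ring
      -- the N form
      have hNx : x ⬝ᵥ (N *ᵥ x) = a0 ⬝ᵥ a0 + ∑ l, (a l) ⬝ᵥ (a l) := hNform x
      -- assemble
      have hT : x ⬝ᵥ ((Q + ε • S + ε • M) *ᵥ x)
          = x ⬝ᵥ (Q *ᵥ x) + ε * (x ⬝ᵥ (S *ᵥ x)) + ε * (x ⬝ᵥ (M *ᵥ x)) := by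
        rw [add_mulVec, add_mulVec, dotProduct_add, dotProduct_add,
          smul_mulVec, smul_mulVec, dotProduct_smul, dotProduct_smul,
          smul_eq_mul, smul_eq_mul]
      rw [hT, hQx, hMx]
      set s := x ⬝ᵥ (S *ᵥ x) with hs
      have hsN : ε * (a0 ⬝ᵥ a0 + ∑ l, (a l) ⬝ᵥ (a l)) < s := by
        rw [← hNx]; exact hεN x hx
      have hB0 : 0 ≤ b0 ⬝ᵥ b0 + 2 * ε * (a0 ⬝ᵥ b0) + ε^2 * (a0 ⬝ᵥ a0) := sq_expand a0 b0 ε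
      have hBl : ∀ l ∈ Finset.univ, (0:ℝ) ≤ (b l) ⬝ᵥ (b l) + 2 * ε * ((a l) ⬝ᵥ (b l))
          + ε^2 * ((a l) ⬝ᵥ (a l)) := fun l _ => sq_expand (a l) (b l) ε
      have hBsum : 0 ≤ ∑ l, ((b l) ⬝ᵥ (b l) + 2 * ε * ((a l) ⬝ᵥ (b l))
          + ε^2 * ((a l) ⬝ᵥ (a l))) := Finset.sum_nonneg hBl
      have hcl : ∀ l ∈ Finset.univ, (0:ℝ) ≤ c l := by
        intro l _
        have := hP.posSemidef.dotProduct_mulVec_nonneg ((Θ * E l) *ᵥ x)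
        rw [hc]
        simp only [← mulVec_mulVec]
        simpa using this
      have hcsum : 0 ≤ ∑ l, c l := Finset.sum_nonneg hcl
      have hsplit : b0 ⬝ᵥ b0 + ∑ l, (b l) ⬝ᵥ (b l) + ε * s
            + ε * (2 * (a0 ⬝ᵥ b0) + ∑ l, (2 * ((a l) ⬝ᵥ (b l)) + c l))
          = (b0 ⬝ᵥ b0 + 2 * ε * (a0 ⬝ᵥ b0) + ε^2 * (a0 ⬝ᵥ a0))
            + (∑ l, ((b l) ⬝ᵥ (b l) + 2 * ε * ((a l) ⬝ᵥ (b l)) + ε^2 * ((a l) ⬝ᵥ (a l))))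
            + ε * (∑ l, c l)
            + ε * (s - ε * (a0 ⬝ᵥ a0 + ∑ l, (a l) ⬝ᵥ (a l))) := by
        rw [Finset.sum_add_distrib, Finset.sum_add_distrib, Finset.sum_add_distrib,
          ← Finset.mul_sum, ← Finset.mul_sum, ← Finset.mul_sum]
        ring
      rw [hsplit]
      have hlast : 0 < ε * (s - ε * (a0 ⬝ᵥ a0 + ∑ l, (a l) ⬝ᵥ (a l))) :=
        mul_pos hε (by linarith)
      have hcs : 0 ≤ ε * (∑ l, c l) := mul_nonneg (le_of_lt hε) hcsum
      linarith
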